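/- Let η > 0, κ ∈ ℝ^{n×n} with κ_ij > 0, r, c ∈ Δ^n, α, β ∈ ℝ^n, and U ∈ ℝ^{d×k} with U^TU = I_k. Then L_η((α,β,U),κ) ≥ −‖C‖_∞ − η ‖log κ‖_∞, where C_ij = ‖x_i − y_j‖², ‖C‖_∞ = max_{i,j}|C_ij|, and ‖log κ‖_∞ = max_{i,j}|log κ_ij|. -/

import Mathlib

open scoped BigOperators
open Matrix

noncomputable section

namespace PRWPaper

/-- Squared Euclidean norm of a vector in `ℝ^d`. -/
def sqnorm {d : ℕ} (v : Fin d → ℝ) : ℝ := ∑ l, (v l) ^ 2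

/-- `‖Uᵀ w‖²  = ⟨w wᵀ, U Uᵀ⟩` for `U ∈ ℝ^{d×k}`, `w ∈ ℝ^d`. -/
def projSq {d k : ℕ} (U : Matrix (Fin d) (Fin k) ℝ) (w : Fin d → ℝ) : ℝ :=
  ∑ m, (∑ l, U l m * w l) ^ 2

/-- `C_ij = ‖x_i - y_j‖²`. -/
def costC {n d : ℕ} (x y : Fin n → Fin d → ℝ) (i j : Fin n) : ℝ :=
  sqnorm (fun l => x i l - y j l)

/-- `[C(U)]_ij = ‖Uᵀ (x_i - y_j)‖² = ⟨M_ij, U Uᵀ⟩`. -/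
def costCU {n d k : ℕ} (x y : Fin n → Fin d → ℝ) (U : Matrix (Fin d) (Fin k) ℝ)
    (i j : Fin n) : ℝ :=
  projSq U (fun l => x i l - y j l)

/-- `‖C‖_∞ = max_{i,j} |C_ij|`. -/
def CInf {n d : ℕ} (x y : Fin n → Fin d → ℝ) : ℝ :=
  ⨆ p : Fin n × Fin n, |costC x y p.1 p.2|

/-- `φ_ij(α, β, U) = α_i + β_j + ⟨M_ij, U Uᵀ⟩`. -/
def phi {n d k : ℕ} (x y : Fin n → Fin d → ℝ) (α β : Fin n → ℝ)
    (U : Matrix (Fin d) (Fin k) ℝ) (i j : Fin n) : ℝ :=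
  α i + β j + costCU x y U i j

/-- `min_{i,j} φ_ij(α, β, U)`. -/
def phiMin {n d k : ℕ} (x y : Fin n → Fin d → ℝ) (α β : Fin n → ℝ)
    (U : Matrix (Fin d) (Fin k) ℝ) : ℝ :=
  ⨅ p : Fin n × Fin n, phi x y α β U p.1 p.2

/-- Membership in the (relatively open) simplex `Δ^n`. -/
def inSimplex {n : ℕ} (r : Fin n → ℝ) : Prop :=
  (∑ i, r i) = 1 ∧ ∀ i, 0 < r i

/-- Membership in the transportation polytope `Π(r, c)`. -/
def inPlans {n : ℕ} (r c : Fin n → ℝ) (π : Matrix (Fin n) (Fin n) ℝ) : Prop :=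
  (∀ i, ∑ j, π i j = r i) ∧ (∀ j, ∑ i, π i j = c j) ∧ ∀ i j, 0 ≤ π i j

/-- `ℓ₁` norm of a matrix. -/
def l1norm {n : ℕ} (A : Matrix (Fin n) (Fin n) ℝ) : ℝ := ∑ i, ∑ j, |A i j|

/-- `ζ_η(x, κ)_ij = κ_ij exp(-φ_ij(x)/η)`. -/
def zeta {n d k : ℕ} (η : ℝ) (κ : Matrix (Fin n) (Fin n) ℝ) (x y : Fin n → Fin d → ℝ)
    (α β : Fin n → ℝ) (U : Matrix (Fin d) (Fin k) ℝ) : Matrix (Fin n) (Fin n) ℝ :=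
  fun i j => κ i j * Real.exp (-(phi x y α β U i j) / η)

/-- `L_η((α,β,U), κ) = rᵀα + cᵀβ + η log ‖ζ_η((α,β,U),κ)‖₁`. -/
def Lfun {n d k : ℕ} (η : ℝ) (κ : Matrix (Fin n) (Fin n) ℝ) (r c : Fin n → ℝ)
    (x y : Fin n → Fin d → ℝ) (α β : Fin n → ℝ) (U : Matrix (Fin d) (Fin k) ℝ) : ℝ :=
  (∑ i, r i * α i) + (∑ j, c j * β j) + η * Real.log (l1norm (zeta η κ x y α β U))

/-- `π_η(x, κ) = ζ_η(x,κ)/‖ζ_η(x,κ)‖₁`. -/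
def piEta {n d k : ℕ} (η : ℝ) (κ : Matrix (Fin n) (Fin n) ℝ) (x y : Fin n → Fin d → ℝ)
    (α β : Fin n → ℝ) (U : Matrix (Fin d) (Fin k) ℝ) : Matrix (Fin n) (Fin n) ℝ :=
  fun i j => zeta η κ x y α β U i j / l1norm (zeta η κ x y α β U)

/-- Entropy `H(π) = -Σ_ij π_ij log π_ij` (with the convention `0 log 0 = 0`,
which holds since `Real.log 0 = 0`). -/
def entropy {n : ℕ} (π : Matrix (Fin n) (Fin n) ℝ) : ℝ :=
  -∑ i, ∑ j, π i j * Real.log (π i j)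

/-- `h(π, U) = ⟨C(U) - η log κ, π⟩ - η H(π)`. -/
def hObj {n d k : ℕ} (η : ℝ) (κ : Matrix (Fin n) (Fin n) ℝ) (x y : Fin n → Fin d → ℝ)
    (U : Matrix (Fin d) (Fin k) ℝ) (π : Matrix (Fin n) (Fin n) ℝ) : ℝ :=
  (∑ i, ∑ j, (costCU x y U i j - η * Real.log (κ i j)) * π i j) - η * entropy π

/-- `‖π 1 - r‖₁`, the row-sum feasibility residual. -/
def rowRes {n : ℕ} (r : Fin n → ℝ) (π : Matrix (Fin n) (Fin n) ℝ) : ℝ :=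
  ∑ i, |(∑ j, π i j) - r i|

/-- `‖πᵀ 1 - c‖₁`, the column-sum feasibility residual. -/
def colRes {n : ℕ} (c : Fin n → ℝ) (π : Matrix (Fin n) (Fin n) ℝ) : ℝ :=
  ∑ j, |(∑ i, π i j) - c j|

/-- Variation seminorm `‖v‖_var = max_i v_i - min_i v_i` of a vector. -/
def varVec {n : ℕ} (v : Fin n → ℝ) : ℝ := (⨆ i, v i) - (⨅ i, v i)

/-- `‖log κ‖_var = max_{ij} log κ_ij - min_{ij} log κ_ij`. -/
def varLog {n : ℕ} (κ : Matrix (Fin n) (Fin n) ℝ) : ℝ :=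
  (⨆ p : Fin n × Fin n, Real.log (κ p.1 p.2)) - (⨅ p : Fin n × Fin n, Real.log (κ p.1 p.2))

/-- `‖log κ‖_∞ = max_{ij} |log κ_ij|`. -/
def logInf {n : ℕ} (κ : Matrix (Fin n) (Fin n) ℝ) : ℝ :=
  ⨆ p : Fin n × Fin n, |Real.log (κ p.1 p.2)|

/-- Frobenius norm of a matrix. -/
def frobNorm {d k : ℕ} (A : Matrix (Fin d) (Fin k) ℝ) : ℝ :=
  Real.sqrt (∑ l, ∑ m, (A l m) ^ 2)

/-- `V_π = Σ_ij π_ij M_ij` with `M_ij = (x_i - y_j)(x_i - y_j)ᵀ`. -/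
def Vmat {n d : ℕ} (x y : Fin n → Fin d → ℝ) (π : Matrix (Fin n) (Fin n) ℝ) :
    Matrix (Fin d) (Fin d) ℝ :=
  fun l l' => ∑ i, ∑ j, π i j * ((x i l - y j l) * (x i l' - y j l'))

/-- Projection onto the tangent space of the Stiefel manifold at `U`:
`Proj_{T_U S}(A) = A - U (UᵀA + AᵀU)/2`. -/
def projTan {d k : ℕ} (U A : Matrix (Fin d) (Fin k) ℝ) : Matrix (Fin d) (Fin k) ℝ :=
  A - (1 / 2 : ℝ) • (U * (Uᵀ * A + Aᵀ * U))

/-- Transport plan `(u_i A_ij v_j)_{ij}` normalized to total mass one. -/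
def sinkMat {n : ℕ} (A : Matrix (Fin n) (Fin n) ℝ) (u v : Fin n → ℝ) :
    Matrix (Fin n) (Fin n) ℝ :=
  fun i j => u i * A i j * v j / (∑ i', ∑ j', u i' * A i' j' * v j')


lemma projSq_le_sqnorm {d k : ℕ} (U : Matrix (Fin d) (Fin k) ℝ) (hU : Uᵀ * U = 1)
    (w : Fin d → ℝ) : projSq U w ≤ sqnorm w := by
  set v : Fin k → ℝ := fun m => ∑ l, U l m * w l with hv
  have key : (0:ℝ) ≤ ∑ l, (w l - ∑ m, U l m * v m)^2 :=
    Finset.sum_nonneg fun _ _ => sq_nonneg _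
  have hcross : ∑ l, w l * (∑ m, U l m * v m) = ∑ m, v m ^ 2 := by
    simp_rw [Finset.mul_sum]
    rw [Finset.sum_comm]
    refine Finset.sum_congr rfl fun m _ => ?_
    have h1 : ∑ l, w l * (U l m * v m) = (∑ l, U l m * w l) * v m := by
      rw [Finset.sum_mul]; exact Finset.sum_congr rfl fun l _ => by ring
    have h2 : (∑ l, U l m * w l) = v m := rfl
    rw [h1, h2, sq]
  have hortho : ∀ m m', ∑ l, U l m * U l m' = if m = m' then (1:ℝ) else 0 := by
    intro m m'
    have := congrFun (congrFun hU m) m'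
    simpa [Matrix.mul_apply, Matrix.transpose_apply, Matrix.one_apply] using this
  have hsq : ∑ l, (∑ m, U l m * v m)^2 = ∑ m, v m ^ 2 := by
    have : ∀ l, (∑ m, U l m * v m)^2 = ∑ m, ∑ m', (U l m * v m) * (U l m' * v m') := by
      intro l; rw [sq, Finset.sum_mul_sum]
    simp_rw [this]
    rw [Finset.sum_comm]
    have : ∀ m, ∑ l, ∑ m', (U l m * v m) * (U l m' * v m')
        = ∑ m', v m * v m' * (∑ l, U l m * U l m') := by
      intro m
      rw [Finset.sum_comm]
      refine Finset.sum_congr rfl fun m' _ => ?_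
      rw [Finset.mul_sum]
      exact Finset.sum_congr rfl fun l _ => by ring
    simp_rw [this, hortho]
    simp [sq]
  have expand : ∑ l, (w l - ∑ m, U l m * v m)^2 = sqnorm w - ∑ m, v m ^ 2 := by
    have : ∀ l, (w l - ∑ m, U l m * v m)^2
        = w l ^ 2 - 2 * (w l * (∑ m, U l m * v m)) + (∑ m, U l m * v m)^2 := by
      intro l; ring
    simp_rw [this]
    rw [Finset.sum_add_distrib, Finset.sum_sub_distrib, ← Finset.mul_sum, hcross, hsq]
    unfold sqnorm; ring
  have : projSq U w = ∑ m, v m ^ 2 := rfl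
  linarith [key, expand.symm ▸ key]

/-- lower bound `L_η((α,β,U),κ) ≥ -‖C‖_∞ - η ‖log κ‖_∞`. -/
theorem statement4 (n d k : ℕ) (hn : 1 ≤ n) (η : ℝ) (hη : 0 < η)
    (κ : Matrix (Fin n) (Fin n) ℝ) (hκ : ∀ i j, 0 < κ i j)
    (r c : Fin n → ℝ) (hr : inSimplex r) (hc : inSimplex c)
    (x y : Fin n → Fin d → ℝ) (α β : Fin n → ℝ)
    (U : Matrix (Fin d) (Fin k) ℝ) (hU : Uᵀ * U = 1) :
    Lfun η κ r c x y α β U ≥ -(CInf x y) - η * logInf κ := by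
  classical
  have hne : Nonempty (Fin n) := ⟨⟨0, hn⟩⟩
  obtain ⟨i₀, _, hi₀⟩ := Finset.exists_min_image Finset.univ α ⟨Classical.arbitrary (Fin n), Finset.mem_univ _⟩
  obtain ⟨j₀, _, hj₀⟩ := Finset.exists_min_image Finset.univ β ⟨Classical.arbitrary (Fin n), Finset.mem_univ _⟩
  set z := zeta η κ x y α β U with hz
  have hzpos : ∀ i j, 0 < z i j := fun i j =>
    mul_pos (hκ i j) (Real.exp_pos _)
  have hS : l1norm z = ∑ i, ∑ j, z i j := by
    unfold l1norm
    exact Finset.sum_congr rfl fun i _ => Finset.sum_congr rfl fun j _ =>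
      abs_of_pos (hzpos i j)
  have hSpos : 0 < l1norm z := by
    rw [hS]
    exact Finset.sum_pos (fun i _ => Finset.sum_pos (fun j _ => hzpos i j) Finset.univ_nonempty) Finset.univ_nonempty
  have hSle : z i₀ j₀ ≤ l1norm z := by
    rw [hS]
    calc z i₀ j₀ ≤ ∑ j, z i₀ j :=
          Finset.single_le_sum (fun j _ => (hzpos i₀ j).le) (Finset.mem_univ j₀)
      _ ≤ ∑ i, ∑ j, z i j :=
          Finset.single_le_sum (fun i _ => Finset.sum_nonneg fun j _ => (hzpos i j).le)
            (Finset.mem_univ i₀)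
  have hlog : Real.log (z i₀ j₀) ≤ Real.log (l1norm z) :=
    Real.log_le_log (hzpos i₀ j₀) hSle
  have hlogz : Real.log (z i₀ j₀) = Real.log (κ i₀ j₀) - phi x y α β U i₀ j₀ / η := by
    rw [hz]
    unfold zeta
    rw [Real.log_mul (hκ i₀ j₀).ne' (Real.exp_pos _).ne', Real.log_exp]
    ring
  -- bounds on the linear terms
  have hA : α i₀ ≤ ∑ i, r i * α i := by
    calc α i₀ = ∑ i, r i * α i₀ := by rw [← Finset.sum_mul, hr.1, one_mul]
      _ ≤ ∑ i, r i * α i :=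
        Finset.sum_le_sum fun i _ =>
          mul_le_mul_of_nonneg_left (hi₀ i (Finset.mem_univ i)) (hr.2 i).le
  have hB : β j₀ ≤ ∑ j, c j * β j := by
    calc β j₀ = ∑ j, c j * β j₀ := by rw [← Finset.sum_mul, hc.1, one_mul]
      _ ≤ ∑ j, c j * β j :=
        Finset.sum_le_sum fun j _ =>
          mul_le_mul_of_nonneg_left (hj₀ j (Finset.mem_univ j)) (hc.2 j).le
  -- sup bounds
  have hbddC : BddAbove (Set.range fun p : Fin n × Fin n => |costC x y p.1 p.2|) :=
    (Set.finite_range _).bddAbove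
  have hbddL : BddAbove (Set.range fun p : Fin n × Fin n => |Real.log (κ p.1 p.2)|) :=
    (Set.finite_range _).bddAbove
  have hCle : costCU x y U i₀ j₀ ≤ CInf x y := by
    have h1 : costCU x y U i₀ j₀ ≤ costC x y i₀ j₀ :=
      projSq_le_sqnorm U hU _
    have h2 : costC x y i₀ j₀ ≤ |costC x y i₀ j₀| := le_abs_self _
    have h3 : |costC x y i₀ j₀| ≤ CInf x y := le_ciSup hbddC (i₀, j₀)
    linarith
  have hLle : -Real.log (κ i₀ j₀) ≤ logInf κ := by
    have h2 : -Real.log (κ i₀ j₀) ≤ |Real.log (κ i₀ j₀)| := neg_le_abs _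
    exact h2.trans (le_ciSup hbddL (i₀, j₀))
  -- assemble
  have hmul : η * Real.log (z i₀ j₀) ≤ η * Real.log (l1norm z) :=
    mul_le_mul_of_nonneg_left hlog hη.le
  have hval : η * Real.log (z i₀ j₀)
      = η * Real.log (κ i₀ j₀) - (α i₀ + β j₀ + costCU x y U i₀ j₀) := by
    rw [hlogz]
    unfold phi
    field_simp
  have hLlow : -(CInf x y) - η * logInf κ
      ≤ α i₀ + β j₀ + η * Real.log (z i₀ j₀) := by
    rw [hval]
    have : η * (-(logInf κ)) ≤ η * Real.log (κ i₀ j₀) :=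
      mul_le_mul_of_nonneg_left (by linarith) hη.le
    nlinarith
  unfold Lfun
  rw [← hz]
  have := add_le_add (add_le_add hA hB) hmul
  linarith [hLlow, this]


end PRWPaper
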